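/- Let α ∈ (0,1) and c₊, c₋ > 0. Every continuous function y : [0,∞) → ℝ satisfying y(t) = ∫₀ᵗ (c₊·1_{y(s)≥0} − c₋·1_{y(s)<0})|y(s)|^α ds for all t ≥ 0 satisfies −(c₋(1−α)t)^{1/(1−α)} ≤ y(t) ≤ (c₊(1−α)t)^{1/(1−α)} for all t ≥ 0. -/

import Mathlib

open Set intervalIntegral

private lemma upper_bound (α cplus cminus : ℝ) (hα : α ∈ Set.Ioo (0:ℝ) 1)
    (hcp : 0 < cplus) (hcm : 0 < cminus)
    (y : ℝ → ℝ) (hycont : ContinuousOn y (Set.Ici (0:ℝ)))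
    (hyeq : ∀ t : ℝ, 0 ≤ t →
      y t = ∫ s in (0:ℝ)..t, (if 0 ≤ y s then cplus else -cminus) * |y s| ^ α) :
    ∀ t : ℝ, 0 ≤ t → y t ≤ (cplus * (1 - α) * t) ^ (1 / (1 - α)) := by
  obtain ⟨hα0, hα1⟩ := hα
  have h1α : (0:ℝ) < 1 - α := by linarith
  set p : ℝ := 1 / (1 - α) with hp_def
  have hp : 0 < p := by positivity
  set c : ℝ := cplus * (1 - α) with hc_def
  have hc : 0 < c := by positivity
  -- rewrite integrand as a continuous function of y
  have hF : ∀ x : ℝ, (if 0 ≤ x then cplus else -cminus) * |x| ^ α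
      = cplus * (max x 0) ^ α - cminus * (max (-x) 0) ^ α := by
    intro x
    rcases le_or_gt 0 x with h | h
    · rw [if_pos h, abs_of_nonneg h, max_eq_left h,
        max_eq_right (neg_nonpos.2 h), Real.zero_rpow hα0.ne', mul_zero, sub_zero]
    · rw [if_neg (not_le.2 h), abs_of_neg h, max_eq_right h.le,
        max_eq_left (neg_nonneg.2 h.le), Real.zero_rpow hα0.ne', mul_zero, zero_sub,
        neg_mul]
  have hrpowα : Continuous fun x : ℝ => x ^ α := Real.continuous_rpow_const hα0.le
  have hFcont : Continuous fun x : ℝ =>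
      cplus * (max x 0) ^ α - cminus * (max (-x) 0) ^ α := by
    apply Continuous.sub
    · exact continuous_const.mul (hrpowα.comp (continuous_id.max continuous_const))
    · exact continuous_const.mul (hrpowα.comp (continuous_neg.max continuous_const))
  have hInt : ∀ T : ℝ, 0 ≤ T →
      IntervalIntegrable (fun s => (if 0 ≤ y s then cplus else -cminus) * |y s| ^ α)
        MeasureTheory.volume 0 T := by
    intro T hT
    have : ContinuousOn (fun s => (if 0 ≤ y s then cplus else -cminus) * |y s| ^ α)
        (Icc 0 T) := by
      have := hFcont.comp_continuousOn (hycont.mono (Icc_subset_Ici_self : Icc (0:ℝ) T ⊆ Ici 0))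
      refine this.congr fun s _ => ?_
      simp only [Function.comp, hF]
    exact (this.mono (by rw [uIcc_of_le hT])).intervalIntegrable
  -- for each ε > 0, y t ≤ (c t + ε)^p
  have key : ∀ ε : ℝ, 0 < ε → ∀ t : ℝ, 0 ≤ t → y t ≤ (c * t + ε) ^ p := by
    intro ε hε t ht
    set X : ℝ → ℝ := fun s => (c * s + ε) ^ p with hX_def
    have hXpos : ∀ s : ℝ, 0 ≤ s → 0 < c * s + ε := fun s hs => by positivity
    have haff : Continuous fun s : ℝ => c * s + ε :=
      (continuous_const.mul continuous_id).add continuous_const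
    have hXcont : Continuous X := (Real.continuous_rpow_const hp.le).comp haff
    have hXnn : ∀ s : ℝ, 0 ≤ s → 0 ≤ X s := fun s hs =>
      (Real.rpow_pos_of_pos (hXpos s hs) p).le
    -- derivative / integral of X
    have hXint : ∀ T : ℝ, 0 ≤ T →
        (∫ s in (0:ℝ)..T, cplus * (c * s + ε) ^ (α / (1 - α))) = X T - X 0 := by
      intro T hT
      have hderiv : ∀ s ∈ uIcc (0:ℝ) T,
          HasDerivAt X (cplus * (c * s + ε) ^ (α / (1 - α))) s := by
        intro s hs
        rw [uIcc_of_le hT] at hs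
        have h1 : HasDerivAt (fun s : ℝ => c * s + ε) c s := by
          simpa using ((hasDerivAt_id s).const_mul c).add_const ε
        have h2 := h1.rpow_const (p := p) (Or.inl (hXpos s hs.1).ne')
        have he : p - 1 = α / (1 - α) := by
          rw [hp_def, eq_div_iff h1α.ne', sub_mul, one_div, inv_mul_cancel₀ h1α.ne']; ring
        have hcoef : c * p = cplus := by
          rw [hp_def, hc_def, mul_one_div, mul_div_assoc, div_self h1α.ne', mul_one]
        convert h2 using 1
        rw [he, ← hcoef]
      have hgint : IntervalIntegrable
          (fun s => cplus * (c * s + ε) ^ (α / (1 - α))) MeasureTheory.volume 0 T := by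
        apply Continuous.intervalIntegrable
        exact continuous_const.mul
          ((Real.continuous_rpow_const (by positivity)).comp haff)
      exact intervalIntegral.integral_eq_sub_of_hasDerivAt hderiv hgint
    -- suppose not
    by_contra hcon
    push_neg at hcon
    set S : Set ℝ := {s | s ∈ Icc (0:ℝ) t ∧ X s ≤ y s} with hS_def
    have hSclosed : IsClosed S := by
      have hyc : ContinuousOn (fun s => y s - X s) (Icc 0 t) :=
        (hycont.mono Icc_subset_Ici_self).sub hXcont.continuousOn
      have : S = Icc 0 t ∩ (fun s => y s - X s) ⁻¹' Ici 0 := by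
        ext s; simp [hS_def, sub_nonneg, and_comm]
      rw [this]
      exact hyc.preimage_isClosed_of_isClosed isClosed_Icc isClosed_Ici
    have hScomp : IsCompact S :=
      isCompact_Icc.of_isClosed_subset hSclosed fun s hs => hs.1
    have hSne : S.Nonempty := ⟨t, ⟨ht, le_rfl⟩, hcon.le⟩
    set τ : ℝ := sInf S with hτ_def
    have hτS : τ ∈ S := hScomp.sInf_mem hSne
    have hτIcc : τ ∈ Icc (0:ℝ) t := hτS.1
    have hy0 : y 0 = 0 := by simpa using hyeq 0 le_rfl
    have hτpos : 0 < τ := by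
      rcases lt_or_eq_of_le hτIcc.1 with h | h
      · exact h
      · exfalso
        have h2 : X 0 ≤ y 0 := h ▸ hτS.2
        have h3 : 0 < X 0 := Real.rpow_pos_of_pos (hXpos 0 le_rfl) p
        rw [hy0] at h2
        linarith
    have hlt : ∀ s : ℝ, 0 ≤ s → s < τ → y s < X s := by
      intro s hs hsτ
      by_contra hnot
      push_neg at hnot
      have : s ∈ S := ⟨⟨hs, hsτ.le.trans hτIcc.2⟩, hnot⟩
      exact absurd (csInf_le hScomp.bddBelow this) (not_le.2 hsτ)
    -- y τ ≤ X τ by continuity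
    have hyleτ : y τ ≤ X τ := by
      have hcwa : ContinuousWithinAt (fun s => y s - X s) (Ico 0 τ) τ := by
        refine ContinuousWithinAt.mono ?_ (fun s hs => (⟨hs.1, hs.2.le.trans hτIcc.2⟩ : s ∈ Icc (0:ℝ) t))
        exact ((hycont.mono Icc_subset_Ici_self).sub hXcont.continuousOn) τ hτIcc
      haveI : (nhdsWithin τ (Ico (0:ℝ) τ)).NeBot := by
        refine mem_closure_iff_nhdsWithin_neBot.mp ?_
        rw [closure_Ico hτpos.ne]
        exact ⟨hτpos.le, le_rfl⟩
      have hev : ∀ᶠ s in nhdsWithin τ (Ico (0:ℝ) τ), y s - X s ≤ 0 :=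
        eventually_mem_nhdsWithin.mono fun s hs => sub_nonpos.2 (hlt s hs.1 hs.2).le
      have h5 : y τ - X τ ≤ 0 := le_of_tendsto hcwa hev
      linarith
    have hyle : ∀ s ∈ Icc (0:ℝ) τ, y s ≤ X s := by
      intro s hs
      rcases lt_or_eq_of_le hs.2 with h | h
      · exact (hlt s hs.1 h).le
      · rw [h]; exact hyleτ
    -- integral comparison
    have hbound : ∀ s ∈ Icc (0:ℝ) τ,
        (if 0 ≤ y s then cplus else -cminus) * |y s| ^ α
          ≤ cplus * (c * s + ε) ^ (α / (1 - α)) := by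
      intro s hs
      rw [hF]
      have hXs : 0 ≤ X s := hXnn s hs.1
      have h1 : (max (y s) 0) ^ α ≤ (X s) ^ α :=
        Real.rpow_le_rpow (le_max_right _ _) (max_le (hyle s hs) hXs) hα0.le
      have h2 : 0 ≤ cminus * (max (-(y s)) 0) ^ α :=
        mul_nonneg hcm.le (Real.rpow_nonneg (le_max_right _ _) α)
      have hXαeq : (X s) ^ α = (c * s + ε) ^ (α / (1 - α)) := by
        show ((c * s + ε) ^ p) ^ α = _
        rw [← Real.rpow_mul (hXpos s hs.1).le]
        congr 1
        rw [hp_def]; ring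
      calc cplus * (max (y s) 0) ^ α - cminus * (max (-(y s)) 0) ^ α
          ≤ cplus * (max (y s) 0) ^ α := by linarith
        _ ≤ cplus * (X s) ^ α := by nlinarith
        _ = cplus * (c * s + ε) ^ (α / (1 - α)) := by rw [hXαeq]
    have hgint : IntervalIntegrable
        (fun s => cplus * (c * s + ε) ^ (α / (1 - α))) MeasureTheory.volume 0 τ := by
      apply Continuous.intervalIntegrable
      exact continuous_const.mul
        ((Real.continuous_rpow_const (by positivity)).comp haff)
    have hcomp : y τ ≤ X τ - X 0 := by
      rw [hyeq τ hτpos.le, ← hXint τ hτpos.le]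
      exact intervalIntegral.integral_mono_on hτpos.le (hInt τ hτpos.le) hgint hbound
    have hX0 : 0 < X 0 := by
      simpa [hX_def] using Real.rpow_pos_of_pos (show (0:ℝ) < c * 0 + ε by simpa using hε) p
    linarith [hτS.2]
  -- take ε → 0
  intro t ht
  have hcontat : ContinuousAt (fun ε : ℝ => (c * t + ε) ^ p) 0 :=
    ((Real.continuous_rpow_const hp.le).comp (continuous_const.add continuous_id)).continuousAt
  have htend : Filter.Tendsto (fun ε : ℝ => (c * t + ε) ^ p)
      (nhdsWithin 0 (Ioi 0)) (nhds ((c * t) ^ p)) := by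
    have h0 : Filter.Tendsto (fun ε : ℝ => (c * t + ε) ^ p) (nhdsWithin 0 (Ioi 0))
        (nhds ((c * t + 0) ^ p)) :=
      hcontat.tendsto.mono_left (nhdsWithin_le_nhds (s := Ioi 0))
    simpa using h0
  have hev : ∀ᶠ ε in nhdsWithin (0:ℝ) (Ioi 0), y t ≤ (c * t + ε) ^ p :=
    eventually_mem_nhdsWithin.mono fun ε hε => key ε hε t ht
  exact ge_of_tendsto htend hev

theorem stmt18 (α cplus cminus : ℝ) (hα : α ∈ Set.Ioo (0:ℝ) 1)
    (hcp : 0 < cplus) (hcm : 0 < cminus)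
    (y : ℝ → ℝ) (hycont : ContinuousOn y (Set.Ici (0:ℝ)))
    (hyeq : ∀ t : ℝ, 0 ≤ t →
      y t = ∫ s in (0:ℝ)..t, (if 0 ≤ y s then cplus else -cminus) * |y s| ^ α) :
    ∀ t : ℝ, 0 ≤ t →
      -((cminus * (1 - α) * t) ^ (1 / (1 - α))) ≤ y t ∧
      y t ≤ (cplus * (1 - α) * t) ^ (1 / (1 - α)) := by
  obtain ⟨hα0, hα1⟩ := hα
  have hyeq' : ∀ t : ℝ, 0 ≤ t →
      (fun s => -(y s)) t = ∫ s in (0:ℝ)..t,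
        (if 0 ≤ (fun s => -(y s)) s then cminus else -cplus) * |(fun s => -(y s)) s| ^ α := by
    intro t ht
    simp only
    rw [hyeq t ht, ← intervalIntegral.integral_neg]
    congr 1
    funext s
    rcases lt_trichotomy (y s) 0 with h | h | h
    · rw [if_neg (not_le.2 h), if_pos (by linarith : (0:ℝ) ≤ -(y s)), abs_neg]
      ring
    · simp [h, Real.zero_rpow hα0.ne']
    · rw [if_pos h.le, if_neg (by simp; linarith : ¬ (0:ℝ) ≤ -(y s))]
      rw [abs_neg]; ring
  intro t ht
  constructor
  · have := upper_bound α cminus cplus ⟨hα0, hα1⟩ hcm hcp (fun s => -(y s))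
      hycont.neg hyeq' t ht
    linarith
  · exact upper_bound α cplus cminus ⟨hα0, hα1⟩ hcp hcm y hycont hyeq t ht
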